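/- Let M be a measurable space with a σ-finite measure μ, t₁ < T real numbers, ψ : [t₁, T) × M → ℝ and g : [t₁, T) × M → ℝ measurable, with g(·,x) positive, differentiable in t, satisfying ∂g/∂t (t,x) = -2·exp(ψ(t,x))·H(t,x)·g(t,x) where H(t,x) ≥ ε₀ > 0 for all (t,x). Assume ∫_M √(g(t₁,x)) dμ(x) < ∞ and appropriate integrability so that Fubini applies. Then ∫_{t₁}^{T} ∫_M exp(ψ(t,x))·√(g(t,x)) dμ(x) dt ≤ (1/ε₀)·∫_M √(g(t₁,x)) dμ(x). -/

import Mathlib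

open Real MeasureTheory Set

theorem volume_estimate_cylinder
    {M : Type*} [MeasurableSpace M] (μ : Measure M) [SigmaFinite μ]
    (t₁ T ε₀ : ℝ) (g ψ H : ℝ → M → ℝ)
    (hT : t₁ < T) (hε : 0 < ε₀)
    (hmeasg : Measurable (fun p : ℝ × M => g p.1 p.2))
    (hmeasψ : Measurable (fun p : ℝ × M => ψ p.1 p.2))
    (hgpos : ∀ t ∈ Ico t₁ T, ∀ x, 0 < g t x)
    (hHε : ∀ t ∈ Ico t₁ T, ∀ x, ε₀ ≤ H t x)
    (hg' : ∀ t ∈ Ico t₁ T, ∀ x,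
      HasDerivAt (fun s => g s x) (-2 * Real.exp (ψ t x) * H t x * g t x) t)
    (hinit : Integrable (fun x => Real.sqrt (g t₁ x)) μ)
    (hfubini : Integrable (fun p : ℝ × M => Real.exp (ψ p.1 p.2) * Real.sqrt (g p.1 p.2))
      ((volume.restrict (Ico t₁ T)).prod μ)) :
    ∫ t in Ico t₁ T, ∫ x, Real.exp (ψ t x) * Real.sqrt (g t x) ∂μ
      ≤ (1 / ε₀) * ∫ x, Real.sqrt (g t₁ x) ∂μ := by
  -- notation
  set f : ℝ → M → ℝ := fun t x => Real.exp (ψ t x) * Real.sqrt (g t x) with hfdef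
  set D : ℝ → M → ℝ := fun t x => Real.exp (ψ t x) * H t x * Real.sqrt (g t x) with hDdef
  -- derivative of -sqrt ∘ g
  have hφderiv : ∀ x : M, ∀ t ∈ Ico t₁ T,
      HasDerivAt (fun s => -Real.sqrt (g s x)) (D t x) t := by
    intro x t ht
    have hgp := hgpos t ht x
    have h1 : HasDerivAt (fun s => Real.sqrt (g s x))
        ((1 / (2 * Real.sqrt (g t x))) * (-2 * Real.exp (ψ t x) * H t x * g t x)) t :=
      (Real.hasDerivAt_sqrt hgp.ne').comp t (hg' t ht x)
    have h2 : HasDerivAt (fun s => -Real.sqrt (g s x)) _ t := h1.neg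
    convert h2 using 1
    have hs : (0:ℝ) < Real.sqrt (g t x) := Real.sqrt_pos.2 hgp
    have hsq : Real.sqrt (g t x) * Real.sqrt (g t x) = g t x := Real.mul_self_sqrt hgp.le
    simp only [hDdef]
    field_simp
    linear_combination (H t x) * hsq
  -- measurability of f(·,x)
  have hmeasfx : ∀ x : M, Measurable (fun t => f t x) := by
    intro x
    have h1 : Measurable (fun t : ℝ => (t, x)) := measurable_id.prodMk measurable_const
    exact ((hmeasψ.comp h1).exp).mul ((hmeasg.comp h1).sqrt)
  -- Step A: finite-interval bound, for every x and s ∈ [t₁, T)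
  have stepA : ∀ x : M, ∀ s ∈ Ico t₁ T,
      ∫ t in Ioo t₁ s, f t x ≤ (1 / ε₀) * Real.sqrt (g t₁ x) := by
    intro x s hs
    have hsub : Icc t₁ s ⊆ Ico t₁ T := fun t ht => ⟨ht.1, lt_of_le_of_lt ht.2 hs.2⟩
    have hcont : ContinuousOn (fun t => -Real.sqrt (g t x)) (Icc t₁ s) := fun t ht =>
      ((hφderiv x t (hsub ht)).continuousAt).continuousWithinAt
    have hderiv : ∀ t ∈ Ioo t₁ s, HasDerivAt (fun t => -Real.sqrt (g t x)) (D t x) t :=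
      fun t ht => hφderiv x t (hsub ⟨ht.1.le, ht.2.le⟩)
    have hDnonneg : ∀ t ∈ Ico t₁ T, 0 ≤ D t x := by
      intro t ht
      have := (hε.trans_le (hHε t ht x)).le
      positivity
    have hDint : IntegrableOn (fun t => D t x) (Ioc t₁ s) :=
      intervalIntegral.integrableOn_deriv_of_nonneg hcont hderiv
        (fun t ht => hDnonneg t (hsub ⟨ht.1.le, ht.2.le⟩))
    have hDint' : IntegrableOn (fun t => D t x) (Ioo t₁ s) :=
      hDint.mono_set Ioo_subset_Ioc_self
    -- FTC
    have hFTC : ∫ t in t₁..s, D t x = (-Real.sqrt (g s x)) - (-Real.sqrt (g t₁ x)) := by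
      apply intervalIntegral.integral_eq_sub_of_hasDerivAt
      · intro t ht
        rw [uIcc_of_le hs.1] at ht
        exact hφderiv x t (hsub ht)
      · exact (intervalIntegrable_iff_integrableOn_Ioc_of_le hs.1).2 hDint
    have hIoc : ∫ t in Ioc t₁ s, D t x = ∫ t in t₁..s, D t x :=
      (intervalIntegral.integral_of_le hs.1).symm
    have hDval : ∫ t in Ioo t₁ s, D t x ≤ Real.sqrt (g t₁ x) := by
      rw [← integral_Ioc_eq_integral_Ioo, hIoc, hFTC]
      have : 0 ≤ Real.sqrt (g s x) := Real.sqrt_nonneg _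
      linarith
    -- pointwise comparison and integrability of f
    have hle : ∀ t ∈ Ioo t₁ s, f t x ≤ D t x / ε₀ := by
      intro t ht
      have htm : t ∈ Ico t₁ T := hsub ⟨ht.1.le, ht.2.le⟩
      have hH := hHε t htm x
      have h1 : ε₀ * f t x ≤ D t x := by
        have he := (Real.exp_pos (ψ t x)).le
        have hsq := Real.sqrt_nonneg (g t x)
        calc ε₀ * (Real.exp (ψ t x) * Real.sqrt (g t x))
            ≤ H t x * (Real.exp (ψ t x) * Real.sqrt (g t x)) := by
              apply mul_le_mul_of_nonneg_right hH (by positivity)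
          _ = Real.exp (ψ t x) * H t x * Real.sqrt (g t x) := by ring
      rw [le_div_iff₀ hε]
      linarith [h1]
    have hfint : IntegrableOn (fun t => f t x) (Ioo t₁ s) := by
      refine Integrable.mono' (hDint'.div_const ε₀) ((hmeasfx x).aestronglyMeasurable) ?_
      filter_upwards [ae_restrict_mem measurableSet_Ioo] with t ht
      rw [Real.norm_of_nonneg (by positivity)]
      exact hle t ht
    calc ∫ t in Ioo t₁ s, f t x ≤ ∫ t in Ioo t₁ s, D t x / ε₀ := by
          apply setIntegral_mono_on hfint (hDint'.div_const ε₀) measurableSet_Ioo hle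
      _ = (1 / ε₀) * ∫ t in Ioo t₁ s, D t x := by
          rw [integral_div]; ring
      _ ≤ (1 / ε₀) * Real.sqrt (g t₁ x) := by
          apply mul_le_mul_of_nonneg_left hDval (by positivity)
  -- Step B: full-interval bound for x where f(·,x) is integrable
  have stepB : ∀ x : M, IntegrableOn (fun t => f t x) (Ico t₁ T) →
      ∫ t in Ico t₁ T, f t x ≤ (1 / ε₀) * Real.sqrt (g t₁ x) := by
    intro x hint
    set s : ℕ → ℝ := fun n => T - (T - t₁) / (n + 1) with hsdef
    have hTt : (0:ℝ) < T - t₁ := by linarith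
    have hsmem : ∀ n, s n ∈ Ico t₁ T := by
      intro n
      constructor
      · have h1 : (T - t₁) / (n + 1 : ℝ) ≤ (T - t₁) / 1 := by
          apply div_le_div_of_nonneg_left hTt.le one_pos
          exact_mod_cast Nat.le_add_left 1 n
        simp only [hsdef]
        have : (T - t₁) / (n + 1 : ℝ) ≤ T - t₁ := by simpa using h1
        linarith
      · simp only [hsdef]
        have : (0:ℝ) < (T - t₁) / (n + 1) := by positivity
        linarith
    have hmono : Monotone (fun n : ℕ => Ico t₁ (s n)) := by
      intro m n hmn
      apply Ico_subset_Ico le_rfl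
      simp only [hsdef]
      have h1 : (T - t₁) / (n + 1 : ℝ) ≤ (T - t₁) / (m + 1 : ℝ) := by
        apply div_le_div_of_nonneg_left hTt.le (by positivity)
        exact_mod_cast Nat.add_le_add_right hmn 1
      linarith
    have hunion : (⋃ n, Ico t₁ (s n)) = Ico t₁ T := by
      apply Subset.antisymm
      · exact iUnion_subset fun n => Ico_subset_Ico le_rfl (hsmem n).2.le
      · intro t ht
        obtain ⟨n, hn⟩ := exists_nat_gt ((T - t₁) / (T - t))
        refine mem_iUnion.2 ⟨n, ht.1, ?_⟩
        have hTt' : (0:ℝ) < T - t := by linarith [ht.2]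
        have h1 : (T - t₁) / (T - t) < n + 1 := by linarith
        have h2 : (T - t₁) / (n + 1 : ℝ) < T - t := by
          rw [div_lt_iff₀ (by positivity)]
          rw [div_lt_iff₀ hTt'] at h1
          linarith
        simp only [hsdef]
        linarith
    have htendsto := tendsto_setIntegral_of_monotone
        (fun n => measurableSet_Ico) hmono (hunion ▸ hint)
    rw [hunion] at htendsto
    refine le_of_tendsto htendsto (Filter.Eventually.of_forall fun n => ?_)
    have : ∫ t in Ico t₁ (s n), f t x = ∫ t in Ioo t₁ (s n), f t x :=
      integral_Ico_eq_integral_Ioo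
    rw [this]
    exact stepA x (s n) (hsmem n)
  -- Step C: Fubini and conclude
  have hswap : ∫ t in Ico t₁ T, ∫ x, f t x ∂μ = ∫ x, (∫ t in Ico t₁ T, f t x) ∂μ :=
    integral_integral_swap hfubini
  rw [hswap]
  have hintegrand : Integrable (fun x => ∫ t in Ico t₁ T, f t x) μ :=
    hfubini.swap.integral_prod_left
  have hbound : ∀ᵐ x ∂μ, (∫ t in Ico t₁ T, f t x) ≤ (1 / ε₀) * Real.sqrt (g t₁ x) := by
    filter_upwards [hfubini.swap.prod_right_ae] with x hx
    exact stepB x hx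
  calc ∫ x, (∫ t in Ico t₁ T, f t x) ∂μ
      ≤ ∫ x, (1 / ε₀) * Real.sqrt (g t₁ x) ∂μ :=
        integral_mono_ae hintegrand (hinit.const_mul _) hbound
    _ = (1 / ε₀) * ∫ x, Real.sqrt (g t₁ x) ∂μ := integral_const_mul _ _
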